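/- Let A₁, …, A₁₄ be i.i.d. ℕ-valued random variables each with Poisson distribution of rate 1919, and let d₁, …, d₁₄ be nonnegative real-valued random variables with ∑ₜ₌₁..₁₄ dₜ ≤ 28800 almost surely. Define b₀ = 0 and bₜ = max(0, bₜ₋₁ + Aₜ + 2400 − 1920 − dₜ) for 1 ≤ t ≤ 14. Then P(b₁₄ ≥ 4210) ≥ 997/1000. -/

import Mathlib

set_option maxHeartbeats 2000000

open MeasureTheory

section Aux
open Real Finset ProbabilityTheory

lemma step1' {x : ℝ} (hx0 : 0 ≤ x) (hx1 : x ≤ 1) :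
    (1 + x) * Real.exp (-x) ≤ Real.exp (-(x^2/2 - x^3/3)) := by
  have hT : 1 + x + x^2/2 + x^3/6 ≤ Real.exp x := by
    have h := Real.sum_le_exp_of_nonneg hx0 4
    norm_num [Finset.sum_range_succ, Nat.factorial] at h
    nlinarith [h]
  have hpos : (0:ℝ) ≤ 1 - x^2/2 + x^3/3 := by nlinarith
  have h2 : 1 + x ≤ (1 - x^2/2 + x^3/3) * Real.exp x := by
    nlinarith [mul_le_mul_of_nonneg_left hT hpos, pow_nonneg hx0 4, pow_nonneg hx0 5, pow_nonneg hx0 6]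
  have h3 : 1 - x^2/2 + x^3/3 ≤ Real.exp (-(x^2/2 - x^3/3)) := by
    have := Real.add_one_le_exp (-(x^2/2 - x^3/3)); linarith
  calc (1+x) * Real.exp (-x) ≤ ((1 - x^2/2 + x^3/3) * Real.exp x) * Real.exp (-x) := by
        apply mul_le_mul_of_nonneg_right h2 (Real.exp_nonneg _)
    _ = 1 - x^2/2 + x^3/3 := by rw [mul_assoc, ← Real.exp_add]; simp
    _ ≤ _ := h3

lemma exp_six' : (1000:ℝ)/3 ≤ Real.exp 6 := by
  have h := Real.exp_one_gt_d9
  have h6 : Real.exp 1 ^ 6 = Real.exp 6 := by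
    rw [Real.exp_one_pow]; norm_num
  have h2 : (2.7182818283:ℝ)^6 ≤ Real.exp 1 ^ 6 := by
    apply pow_le_pow_left₀ (by norm_num) h.le
  rw [← h6]; nlinarith [h2]

lemma chernoff_end' : Real.exp (-577) * ((26866:ℝ)/26289)^26289 ≤ 3/1000 := by
  set x : ℝ := 577/26289 with hxdef
  have hx0 : (0:ℝ) ≤ x := by norm_num [hxdef]
  have hx1 : x ≤ 1 := by norm_num [hxdef]
  have hb : (26866:ℝ)/26289 = 1 + x := by norm_num [hxdef]
  have hexp : Real.exp (-577) = Real.exp (-x) ^ 26289 := by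
    rw [← Real.exp_nat_mul]; norm_num [hxdef]
  have key : Real.exp (-577) * ((26866:ℝ)/26289)^26289
      = ((1+x) * Real.exp (-x))^26289 := by
    rw [hb, hexp, mul_pow]; ring
  rw [key]
  have h1 : ((1+x) * Real.exp (-x))^26289 ≤ (Real.exp (-(x^2/2 - x^3/3)))^26289 := by
    apply pow_le_pow_left₀ (by positivity) (step1' hx0 hx1)
  refine h1.trans ?_
  rw [← Real.exp_nat_mul]
  have hc : (26289:ℕ) * -(x^2/2 - x^3/3) ≤ -6 := by
    norm_num [hxdef]
  calc Real.exp ((26289:ℕ) * -(x^2/2 - x^3/3)) ≤ Real.exp (-6) := Real.exp_le_exp.mpr hc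
    _ ≤ 3/1000 := by
        rw [Real.exp_neg]
        have := inv_anti₀ (by norm_num : (0:ℝ) < 1000/3) exp_six'
        calc (Real.exp 6)⁻¹ ≤ ((1000:ℝ)/3)⁻¹ := this
          _ = 3/1000 := by norm_num

lemma num_bound' :
    ∑ n ∈ Finset.range 26290, Real.exp (-(26866:ℝ)) * 26866 ^ n / n.factorial ≤ 3/1000 := by
  set θ : ℝ := 26289/26866 with hθdef
  have hθ0 : (0:ℝ) < θ := by norm_num [hθdef]
  have hθ1 : θ ≤ 1 := by norm_num [hθdef]
  have hmul : (26866:ℝ) * θ = 26289 := by norm_num [hθdef]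
  have hterm : ∀ n ∈ Finset.range 26290,
      (Real.exp (-(26866:ℝ)) * 26866 ^ n / n.factorial) * θ^26289
        ≤ Real.exp (-(26866:ℝ)) * 26289 ^ n / n.factorial := by
    intro n hn
    have hn' : n ≤ 26289 := by simpa using Nat.lt_succ_iff.mp (Finset.mem_range.mp hn)
    have hp : θ^26289 ≤ θ^n := pow_le_pow_of_le_one hθ0.le hθ1 hn'
    have h0 : (0:ℝ) ≤ Real.exp (-(26866:ℝ)) * 26866 ^ n / n.factorial := by positivity
    calc (Real.exp (-(26866:ℝ)) * 26866 ^ n / n.factorial) * θ^26289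
        ≤ (Real.exp (-(26866:ℝ)) * 26866 ^ n / n.factorial) * θ^n :=
          mul_le_mul_of_nonneg_left hp h0
      _ = Real.exp (-(26866:ℝ)) * (26866 * θ) ^ n / n.factorial := by
          rw [mul_pow]; ring
      _ = Real.exp (-(26866:ℝ)) * 26289 ^ n / n.factorial := by rw [hmul]
  have hsum : (∑ n ∈ Finset.range 26290, Real.exp (-(26866:ℝ)) * 26866 ^ n / n.factorial) * θ^26289
      ≤ Real.exp (-(26866:ℝ)) * Real.exp 26289 := by
    rw [Finset.sum_mul]
    refine (Finset.sum_le_sum hterm).trans ?_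
    have : ∑ n ∈ Finset.range 26290, Real.exp (-(26866:ℝ)) * 26289 ^ n / n.factorial
        = Real.exp (-(26866:ℝ)) * ∑ n ∈ Finset.range 26290, (26289:ℝ) ^ n / n.factorial := by
      rw [Finset.mul_sum]; exact Finset.sum_congr rfl fun n _ => by ring
    rw [this]
    exact mul_le_mul_of_nonneg_left (Real.sum_le_exp_of_nonneg (by norm_num) _) (Real.exp_nonneg _)
  have hθpow : (0:ℝ) < θ^26289 := pow_pos hθ0 _
  have hsum' : (∑ n ∈ Finset.range 26290, Real.exp (-(26866:ℝ)) * 26866 ^ n / n.factorial) * θ^26289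
      ≤ Real.exp (-577) := by
    rw [← Real.exp_add] at hsum
    have : (-(26866:ℝ)) + 26289 = -577 := by norm_num
    rwa [this] at hsum
  have hinv : θ⁻¹ = (26866:ℝ)/26289 := by rw [hθdef]; rw [inv_div]
  have hfinal : (∑ n ∈ Finset.range 26290, Real.exp (-(26866:ℝ)) * 26866 ^ n / n.factorial)
      ≤ Real.exp (-577) * ((26866:ℝ)/26289)^26289 := by
    have h := (le_div_iff₀ hθpow).mpr hsum'
    rwa [div_eq_mul_inv, ← inv_pow, hinv] at h
  exact hfinal.trans chernoff_end'

end Aux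

/-- A ℕ-valued random variable `S` on a probability space `(Ω, P)` has Poisson
distribution with rate `lam > 0` if `P(S = n) = exp(-lam) * lam^n / n!` for every `n`. -/
def HasPoissonDistribution {Ω : Type*} [MeasurableSpace Ω] (P : Measure Ω)
    (S : Ω → ℕ) (lam : ℝ) : Prop :=
  ∀ n : ℕ, P {ω | S ω = n} = ENNReal.ofReal (Real.exp (-lam) * lam ^ n / n.factorial)

section Conv
open Real Finset ProbabilityTheory

lemma pois_pmf_conv (lx ly : ℝ) (n : ℕ) :
    ∑ j ∈ Finset.range (n+1),
      (Real.exp (-lx) * lx^j / j.factorial) * (Real.exp (-ly) * ly^(n-j) / (n-j).factorial)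
    = Real.exp (-(lx+ly)) * (lx+ly)^n / n.factorial := by
  rw [add_pow]
  rw [Finset.mul_sum, Finset.sum_div]
  refine Finset.sum_congr rfl fun j hj => ?_
  have hj' : j ≤ n := Nat.lt_succ_iff.mp (Finset.mem_range.mp hj)
  have key : ((n.choose j : ℝ)) * j.factorial * (n-j).factorial = n.factorial := by
    exact_mod_cast congrArg (Nat.cast : ℕ → ℝ) (Nat.choose_mul_factorial_mul_factorial hj')
  have h1 : (j.factorial : ℝ) ≠ 0 := Nat.cast_ne_zero.mpr j.factorial_ne_zero
  have h2 : ((n-j).factorial : ℝ) ≠ 0 := Nat.cast_ne_zero.mpr (n-j).factorial_ne_zero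
  have h3 : (n.factorial : ℝ) ≠ 0 := Nat.cast_ne_zero.mpr n.factorial_ne_zero
  have hC : ((n.choose j : ℝ)) ≠ 0 := Nat.cast_ne_zero.mpr (Nat.choose_pos hj').ne'
  rw [neg_add, Real.exp_add, ← key]
  field_simp

lemma poisson_conv {Ω : Type*} [MeasurableSpace Ω] (P : Measure Ω)
    {X Y : Ω → ℕ} {lx ly : ℝ} (hlx : 0 ≤ lx) (hly : 0 ≤ ly)
    (hX : Measurable X) (hY : Measurable Y)
    (hXY : IndepFun X Y P)
    (hpX : HasPoissonDistribution P X lx) (hpY : HasPoissonDistribution P Y ly) :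
    HasPoissonDistribution P (fun ω => X ω + Y ω) (lx + ly) := by
  intro n
  have hset : {ω | X ω + Y ω = n}
      = ⋃ j ∈ Finset.range (n+1), ({ω | X ω = j} ∩ {ω | Y ω = n - j}) := by
    ext ω
    simp only [Set.mem_setOf_eq, Set.mem_iUnion, Set.mem_inter_iff, Finset.mem_range]
    constructor
    · intro h
      exact ⟨X ω, by omega, rfl, by omega⟩
    · rintro ⟨j, hj, h1, h2⟩
      omega
  rw [hset, measure_biUnion_finset ?hd ?hm]
  case hd =>
    intro i _ j _ hij
    refine Set.disjoint_left.mpr fun ω hωi hωj => hij ?_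
    rw [← hωi.1, ← hωj.1]
  case hm =>
    intro j _
    exact (hX (measurableSet_singleton j)).inter (hY (measurableSet_singleton (n - j)))
  have hterm : ∀ j ∈ Finset.range (n+1),
      P ({ω | X ω = j} ∩ {ω | Y ω = n - j})
      = ENNReal.ofReal ((Real.exp (-lx) * lx^j / j.factorial)
          * (Real.exp (-ly) * ly^(n-j) / (n-j).factorial)) := by
    intro j _
    have h := hXY.measure_inter_preimage_eq_mul {j} {n - j}
        (measurableSet_singleton j) (measurableSet_singleton (n-j))
    have hXp : X ⁻¹' {j} = {ω | X ω = j} := rfl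
    have hYp : Y ⁻¹' {n-j} = {ω | Y ω = n - j} := rfl
    rw [hXp, hYp] at h
    rw [h, hpX j, hpY (n-j), ← ENNReal.ofReal_mul (by positivity)]
  rw [Finset.sum_congr rfl hterm, ← ENNReal.ofReal_sum_of_nonneg
    (fun j _ => by positivity), pois_pmf_conv]

lemma poisson_finset_sum {Ω ι : Type*} [MeasurableSpace Ω] (P : Measure Ω)
    [IsProbabilityMeasure P] {A : ι → Ω → ℕ} {lam : ℝ} (hlam : 0 ≤ lam)
    (hAmeas : ∀ i, Measurable (A i))
    (hindep : ProbabilityTheory.iIndepFun A P)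
    (hpois : ∀ i, HasPoissonDistribution P (A i) lam) (s : Finset ι) :
    HasPoissonDistribution P (fun ω => ∑ i ∈ s, A i ω) (s.card * lam) := by
  classical
  induction s using Finset.cons_induction with
  | empty =>
      intro n
      simp only [Finset.sum_empty, Finset.card_empty, Nat.cast_zero, zero_mul]
      cases n with
      | zero =>
          have : {ω : Ω | (0:ℕ) = 0} = Set.univ := by ext ω; simp
          rw [this]
          simp [Real.exp_zero]
      | succ m =>
          have : {ω : Ω | (0:ℕ) = m + 1} = (∅ : Set Ω) := by ext ω; simp
          rw [this]
          simp
  | cons a s ha ih =>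
      have hfun : (fun ω => ∑ i ∈ Finset.cons a s ha, A i ω)
          = fun ω => A a ω + ∑ i ∈ s, A i ω := by
        funext ω; rw [Finset.sum_cons]
      have hrate : (((Finset.cons a s ha).card : ℝ)) * lam = lam + s.card * lam := by
        rw [Finset.card_cons]; push_cast; ring
      rw [hfun, hrate]
      have hsum_meas : Measurable (fun ω => ∑ i ∈ s, A i ω) :=
        Finset.measurable_sum s (fun i _ => hAmeas i)
      have hind : ProbabilityTheory.IndepFun (A a) (fun ω => ∑ i ∈ s, A i ω) P := by
        have h := (hindep.indepFun_finsetSum_of_notMem hAmeas ha).symm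
        have : (∑ j ∈ s, A j) = fun ω => ∑ j ∈ s, A j ω := by
          funext ω; simp
        rwa [this] at h
      exact poisson_conv P hlam (by positivity) (hAmeas a) hsum_meas hind (hpois a) ih

end Conv

/-- With i.i.d. Poisson(1919) hourly arrivals `A 0, …, A 13`, an attacker dumping
2400 extra alerts per hour, nominal service 1920 alerts/hour, and any (random)
defender allocations `d` summing to at most 28800, the Lindley backlog after
14 hours is at least 4210 with probability at least 997/1000. -/
theorem backlog_attack_high_prob {Ω : Type*} [MeasurableSpace Ω] (P : Measure Ω)
    [IsProbabilityMeasure P]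
    (A : Fin 14 → Ω → ℕ) (d : Fin 14 → Ω → ℝ)
    (hAmeas : ∀ i, Measurable (A i))
    (hindep : ProbabilityTheory.iIndepFun A P)
    (hpois : ∀ i, HasPoissonDistribution P (A i) 1919)
    (hdmeas : ∀ i, Measurable (d i))
    (hd0 : ∀ i ω, 0 ≤ d i ω)
    (hdsum : ∀ᵐ ω ∂P, ∑ i, d i ω ≤ 28800)
    (b : ℕ → Ω → ℝ)
    (hb0 : ∀ ω, b 0 ω = 0)
    (hb : ∀ t : Fin 14, ∀ ω,
      b (t + 1) ω = max 0 (b t ω + A t ω + 2400 - 1920 - d t ω)) :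
    997 / 1000 ≤ P {ω | 4210 ≤ b 14 ω} := by
  classical
  set S : Ω → ℕ := fun ω => ∑ i, A i ω with hSdef
  have hSmeas : Measurable S := Finset.measurable_sum _ (fun i _ => hAmeas i)
  have hSpois : HasPoissonDistribution P S 26866 := by
    have h := poisson_finset_sum P (by norm_num : (0:ℝ) ≤ 1919) hAmeas hindep hpois Finset.univ
    have hc : ((Finset.univ.card (α := Fin 14) : ℝ)) * 1919 = 26866 := by
      simp [Finset.card_univ]; norm_num
    rwa [hc] at h
  -- tail bound
  have hEc : P {ω | S ω ≤ 26289} ≤ 3/1000 := by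
    have hset : {ω | S ω ≤ 26289} = ⋃ n ∈ Finset.range 26290, {ω | S ω = n} := by
      ext ω
      simp only [Set.mem_setOf_eq, Set.mem_iUnion, Finset.mem_range]
      constructor
      · intro h; exact ⟨S ω, by omega, rfl⟩
      · rintro ⟨n, hn, h⟩; omega
    rw [hset, measure_biUnion_finset ?hd ?hm]
    case hd =>
      intro i _ j _ hij
      refine Set.disjoint_left.mpr fun ω h1 h2 => hij ?_
      rw [← h1, ← h2]
    case hm =>
      intro n _
      exact hSmeas (measurableSet_singleton n)
    calc ∑ n ∈ Finset.range 26290, P {ω | S ω = n}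
        = ENNReal.ofReal (∑ n ∈ Finset.range 26290,
            Real.exp (-(26866:ℝ)) * 26866 ^ n / n.factorial) := by
          rw [ENNReal.ofReal_sum_of_nonneg (fun n _ => by positivity)]
          exact Finset.sum_congr rfl fun n _ => hSpois n
      _ ≤ ENNReal.ofReal (3/1000) := ENNReal.ofReal_le_ofReal num_bound'
      _ ≤ 3/1000 := by
          rw [ENNReal.ofReal_div_of_pos (by norm_num)]
          gcongr <;> simp [ENNReal.ofReal_ofNat]
  have hE : MeasurableSet {ω | 26290 ≤ S ω} := hSmeas .of_discrete
  have hcompl : {ω | 26290 ≤ S ω}ᶜ = {ω | S ω ≤ 26289} := by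
    ext ω; simp only [Set.mem_compl_iff, Set.mem_setOf_eq]; omega
  have hPE : (997/1000 : ENNReal) ≤ P {ω | 26290 ≤ S ω} := by
    have hadd : P {ω | 26290 ≤ S ω} + P {ω | S ω ≤ 26289} = 1 := by
      rw [← hcompl]; exact prob_add_prob_compl hE
    have h1 : (997/1000 : ENNReal) + P {ω | S ω ≤ 26289} ≤
        P {ω | 26290 ≤ S ω} + P {ω | S ω ≤ 26289} := by
      rw [hadd]
      calc (997/1000 : ENNReal) + P {ω | S ω ≤ 26289}
          ≤ 997/1000 + 3/1000 := add_le_add (le_refl _) hEc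
        _ = 1 := by
            rw [ENNReal.div_add_div_same]
            norm_num
            exact ENNReal.div_self (by norm_num) (by norm_num)
    exact (ENNReal.add_le_add_iff_right (measure_ne_top P _)).mp h1
  -- pathwise implication
  have hpath : ∀ ω, 26290 ≤ S ω → (∑ i, d i ω) ≤ 28800 → 4210 ≤ b 14 ω := by
    intro ω hω hdω
    set f : ℕ → Fin 14 := fun i => ⟨i % 14, Nat.mod_lt i (by norm_num)⟩ with hfdef
    set F : ℕ → ℝ := fun i => (A (f i) ω : ℝ) + 480 - d (f i) ω with hFdef
    have key : ∀ m : ℕ, m ≤ 14 → ∑ i ∈ Finset.range m, F i ≤ b m ω := by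
      intro m
      induction m with
      | zero => intro _; simp [hb0 ω]
      | succ k ih =>
          intro hk
          have hk14 : k < 14 := by omega
          have hfk : f k = ⟨k, hk14⟩ := by
            simp only [hfdef]
            exact Fin.ext (by simp [Nat.mod_eq_of_lt hk14])
          have hbk := hb ⟨k, hk14⟩ ω
          have hih := ih (by omega)
          rw [Finset.sum_range_succ]
          have hmax : b k ω + (A (⟨k, hk14⟩ : Fin 14) ω : ℝ) + 2400 - 1920
              - d (⟨k, hk14⟩ : Fin 14) ω ≤ b (k+1) ω := by
            rw [hbk]; exact le_max_right _ _
          have hFk : F k = (A (⟨k, hk14⟩ : Fin 14) ω : ℝ) + 480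
              - d (⟨k, hk14⟩ : Fin 14) ω := by
            rw [hFdef]; simp only [hfk]
          rw [hFk]
          linarith
    have h14 := key 14 le_rfl
    have hFsum : ∑ i ∈ Finset.range 14, F i
        = ∑ i : Fin 14, ((A i ω : ℝ) + 480 - d i ω) := by
      rw [← Fin.sum_univ_eq_sum_range]
      refine Finset.sum_congr rfl fun i _ => ?_
      have : f (i : ℕ) = i := by
        simp only [hfdef]
        exact Fin.ext (by simp [Nat.mod_eq_of_lt i.isLt])
      simp only [hFdef, this]
    have hsplit : ∑ i : Fin 14, ((A i ω : ℝ) + 480 - d i ω)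
        = (∑ i : Fin 14, (A i ω : ℝ)) + 14 * 480 - ∑ i, d i ω := by
      rw [Finset.sum_sub_distrib, Finset.sum_add_distrib, Finset.sum_const]
      simp [Finset.card_univ]
    have hAcast : (26290 : ℝ) ≤ ∑ i : Fin 14, (A i ω : ℝ) := by
      have : ((26290:ℕ) : ℝ) ≤ ((S ω : ℕ) : ℝ) := Nat.cast_le.mpr hω
      simpa [hSdef, Nat.cast_sum] using this
    rw [hFsum, hsplit] at h14
    linarith
  -- combine
  have hsub : {ω | 26290 ≤ S ω} ⊆ {ω | 4210 ≤ b 14 ω} ∪ {ω | ¬ (∑ i, d i ω) ≤ 28800} := by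
    intro ω hω
    by_cases hd : (∑ i, d i ω) ≤ 28800
    · exact Or.inl (hpath ω hω hd)
    · exact Or.inr hd
  have hN : P {ω | ¬ (∑ i, d i ω) ≤ 28800} = 0 := by
    exact hdsum
  calc (997/1000 : ENNReal) ≤ P {ω | 26290 ≤ S ω} := hPE
    _ ≤ P ({ω | 4210 ≤ b 14 ω} ∪ {ω | ¬ (∑ i, d i ω) ≤ 28800}) := measure_mono hsub
    _ ≤ P {ω | 4210 ≤ b 14 ω} + P {ω | ¬ (∑ i, d i ω) ≤ 28800} := measure_union_le _ _
    _ = P {ω | 4210 ≤ b 14 ω} := by rw [hN, add_zero]
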